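/- Fix ε ∈ (0, 1/2], an integer m ≥ 1, d ∈ [0,1], α > 0, and δ₁, δ₂ ∈ (0,1). Let X_1, …, X_m be i.i.d. Bernoulli(d); conditionally on X, let b_1, …, b_m be independent with b_i ~ Bernoulli(1/2 + ε·X_i/4); let L be an independent real random variable with Laplace(0, 1/(εm)) distribution; and define d̃ = (4/ε)·((1/m)·Σ_{i=1}^m b_i − 1/2) + L. Then P(|d̃ − d| ≥ α) ≤ 2·exp(−2mα²(1−δ₁)²) + 2·exp(−(1/8)·mε²α²δ₁²(1−δ₂)²) + exp(−εmαδ₁δ₂). -/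

import Mathlib

open MeasureTheory ProbabilityTheory

/-- The law of a `Laplace(0, b)` random variable: the measure on `ℝ` with density
`x ↦ (1/(2b))·exp(−|x|/b)` with respect to Lebesgue measure. -/
noncomputable def laplaceMeasure (b : ℝ) : Measure ℝ :=
  volume.withDensity fun x => ENNReal.ofReal (1 / (2 * b) * Real.exp (-|x| / b))

section Aux

open Real Set
open scoped ENNReal

lemma bern_mgf_le {p : ℝ} (hp0 : 0 ≤ p) (hp1 : p ≤ 1) (t : ℝ) :
    Real.exp (-(p*t)) * (1 - p + p * Real.exp t) ≤ Real.exp (t^2/8) := by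
  set F : ℝ → ℝ := fun s => 1 - p + p * Real.exp s with hFdef
  have hFpos : ∀ s, 0 < F s := by
    intro s
    rcases eq_or_lt_of_le hp0 with h|h
    · simp [hFdef, ← h]
    · have := Real.exp_pos s
      have : 0 < p * Real.exp s := by positivity
      simp only [hFdef]; nlinarith
  set g : ℝ → ℝ := fun s => Real.log (F s) - p*s - s^2/8 with hgdef
  set φ : ℝ → ℝ := fun s => p * Real.exp s / F s - p - s/4 with hφdef
  have hFd : ∀ s, HasDerivAt F (p * Real.exp s) s := fun s =>
    ((Real.hasDerivAt_exp s).const_mul p).const_add (1-p)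
  have hgd : ∀ s, HasDerivAt g (φ s) s := by
    intro s
    have h1 : HasDerivAt (fun s => Real.log (F s)) (p*Real.exp s / F s) s :=
      (hFd s).log (hFpos s).ne'
    have h2 := (h1.sub ((hasDerivAt_id s).const_mul p)).sub
      (((hasDerivAt_pow 2 s)).div_const 8)
    refine h2.congr_deriv ?_
    simp [hφdef]
    ring
  have hφd : ∀ s, HasDerivAt φ
      ((p*Real.exp s * F s - p*Real.exp s*(p*Real.exp s))/(F s)^2 - 1/4) s := by
    intro s
    have h1 : HasDerivAt (fun s => p * Real.exp s / F s)
        ((p*Real.exp s * F s - p*Real.exp s*(p*Real.exp s))/(F s)^2) s :=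
      ((Real.hasDerivAt_exp s).const_mul p).div (hFd s) (hFpos s).ne'
    exact (h1.sub_const p).sub ((hasDerivAt_id s).div_const 4)
  have hφderiv_nonpos : ∀ s, deriv φ s ≤ 0 := by
    intro s
    rw [(hφd s).deriv]
    have hu : 0 ≤ p * Real.exp s := by positivity
    have hv : 0 < F s := hFpos s
    have huv : p * Real.exp s ≤ F s := by simp only [hFdef]; nlinarith
    rw [sub_nonpos, div_le_iff₀ (by positivity)]
    have key : ∀ u v : ℝ, u*v - u*u ≤ 1/4 * v^2 := by
      intro u v; nlinarith [sq_nonneg (v - 2*u)]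
    exact key _ _
  have hφanti : Antitone φ :=
    antitone_of_deriv_nonpos (fun s => (hφd s).differentiableAt) hφderiv_nonpos
  have hφ0 : φ 0 = 0 := by simp [hφdef, hFdef]
  have hgdiff : Differentiable ℝ g := fun s => (hgd s).differentiableAt
  have hg0 : g 0 = 0 := by simp [hgdef, hFdef]
  have hgle : ∀ s, g s ≤ 0 := by
    intro s
    rcases le_total s 0 with hs|hs
    · have hmono : MonotoneOn g (Set.Iic 0) := by
        refine monotoneOn_of_deriv_nonneg (convex_Iic 0)
          hgdiff.continuous.continuousOn hgdiff.differentiableOn ?_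
        intro x hx
        rw [(hgd x).deriv]
        rw [interior_Iic] at hx
        have := hφanti (le_of_lt hx)
        rw [hφ0] at this
        exact this
      have := hmono hs (Set.self_mem_Iic) hs
      rwa [hg0] at this
    · have hanti : AntitoneOn g (Set.Ici 0) := by
        refine antitoneOn_of_deriv_nonpos (convex_Ici 0)
          hgdiff.continuous.continuousOn hgdiff.differentiableOn ?_
        intro x hx
        rw [(hgd x).deriv]
        rw [interior_Ici] at hx
        have := hφanti (le_of_lt hx)
        rwa [hφ0] at this
      have := hanti (Set.self_mem_Ici) hs hs
      rwa [hg0] at this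
  have hlog : Real.log (F t) ≤ p*t + t^2/8 := by
    have := hgle t
    simp only [hgdef] at this
    linarith
  have hFle : F t ≤ Real.exp (p*t + t^2/8) := by
    rw [← Real.exp_log (hFpos t)]
    exact Real.exp_le_exp.2 hlog
  calc Real.exp (-(p*t)) * F t ≤ Real.exp (-(p*t)) * Real.exp (p*t + t^2/8) := by
        exact mul_le_mul_of_nonneg_left hFle (Real.exp_pos _).le
    _ = Real.exp (t^2/8) := by rw [← Real.exp_add]; ring_nf

variable {Ω : Type*} [MeasurableSpace Ω] {P : Measure Ω} [IsProbabilityMeasure P]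

set_option linter.unusedSectionVars false

lemma integral_two_point (Z : Ω → ℝ) (hZ : Measurable Z) (h01 : ∀ ω, Z ω = 0 ∨ Z ω = 1) :
    ∫ ω, Z ω ∂P = (P {ω | Z ω = 1}).toReal := by
  have hs : MeasurableSet {ω | Z ω = 1} := hZ (measurableSet_singleton 1)
  have hZeq : Z = Set.indicator {ω | Z ω = 1} (fun _ => (1:ℝ)) := by
    funext ω
    rcases h01 ω with h|h
    · simp [Set.indicator_apply, h]
    · simp [Set.indicator_apply, h]
  calc ∫ ω, Z ω ∂P = ∫ ω, Set.indicator {ω | Z ω = 1} (fun _ => (1:ℝ)) ω ∂P := by rw [← hZeq]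
    _ = (P {ω | Z ω = 1}).toReal • (1:ℝ) := integral_indicator_const _ hs
    _ = (P {ω | Z ω = 1}).toReal := by simp

lemma integrable_bdd (Z : Ω → ℝ) (hZ : Measurable Z) (C : ℝ) (hC : ∀ ω, |Z ω| ≤ C) :
    Integrable Z P :=
  (integrable_const C).mono' hZ.aestronglyMeasurable (ae_of_all _ fun ω => by
    simpa using hC ω)

lemma hoeffding_ge {m : ℕ} (Z : Fin m → Ω → ℝ)
    (hindep : iIndepFun Z P)
    (hmeas : ∀ i, Measurable (Z i))
    (hbd : ∀ i ω, |Z i ω| ≤ 1)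
    (hmgf : ∀ i (t:ℝ), mgf (Z i) P t ≤ Real.exp (t^2/8))
    (s : ℝ) (hs : 0 ≤ s) :
    P {ω | (m:ℝ)*s ≤ ∑ i, Z i ω} ≤ ENNReal.ofReal (Real.exp (-2*m*s^2)) := by
  set t := 4*s with ht_def
  have ht : 0 ≤ t := by positivity
  have hsumbd : ∀ ω, |∑ i, Z i ω| ≤ (m:ℝ) := by
    intro ω
    calc |∑ i, Z i ω| ≤ ∑ i, |Z i ω| := Finset.abs_sum_le_sum_abs _ _
      _ ≤ ∑ _i : Fin m, (1:ℝ) := Finset.sum_le_sum fun i _ => hbd i ω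
      _ = (m:ℝ) := by simp
  have hsum_meas : Measurable (∑ i, Z i) := by
    have : (∑ i, Z i) = fun ω => ∑ i, Z i ω := by funext ω; simp
    rw [this]
    exact Finset.measurable_sum _ fun i _ => hmeas i
  have hint : Integrable (fun ω => Real.exp (t * (∑ i, Z i) ω)) P := by
    apply integrable_bdd _ (by fun_prop) (Real.exp (t * m))
    intro ω
    rw [abs_of_pos (Real.exp_pos _)]
    apply Real.exp_le_exp.2
    have := hsumbd ω
    have h1 : (∑ i, Z i) ω = ∑ i, Z i ω := by simp
    rw [h1]
    nlinarith [abs_nonneg (∑ i, Z i ω), le_abs_self (∑ i, Z i ω)]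
  have hcher := measure_ge_le_exp_mul_mgf (μ := P) (X := ∑ i, Z i) ((m:ℝ)*s) ht hint
  have hmgfsum : mgf (∑ i, Z i) P t ≤ Real.exp (m * (t^2/8)) := by
    rw [show (∑ i, Z i) = ∑ i ∈ Finset.univ, Z i from rfl, hindep.mgf_sum hmeas]
    calc ∏ i, mgf (Z i) P t ≤ ∏ _i : Fin m, Real.exp (t^2/8) :=
          Finset.prod_le_prod (fun i _ => mgf_nonneg) (fun i _ => hmgf i t)
      _ = Real.exp (t^2/8) ^ m := by simp
      _ = Real.exp (m * (t^2/8)) := by rw [← Real.exp_nat_mul]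
  have hfinal : (P {ω | (m:ℝ)*s ≤ (∑ i, Z i) ω}).toReal ≤ Real.exp (-2*m*s^2) := by
    refine hcher.trans ?_
    calc Real.exp (-t * ((m:ℝ)*s)) * mgf (∑ i, Z i) P t
        ≤ Real.exp (-t * ((m:ℝ)*s)) * Real.exp (m * (t^2/8)) :=
          mul_le_mul_of_nonneg_left hmgfsum (Real.exp_pos _).le
      _ = Real.exp (-t * ((m:ℝ)*s) + m * (t^2/8)) := by rw [← Real.exp_add]
      _ = Real.exp (-2*m*s^2) := by congr 1; rw [ht_def]; ring
  have hne : P {ω | (m:ℝ)*s ≤ (∑ i, Z i) ω} ≠ ⊤ := measure_ne_top _ _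
  have := (ENNReal.le_ofReal_iff_toReal_le hne (Real.exp_pos _).le).2 hfinal
  convert this using 3
  simp

lemma hoeffding_abs {m : ℕ} (Z : Fin m → Ω → ℝ)
    (hindep : iIndepFun Z P)
    (hmeas : ∀ i, Measurable (Z i))
    (hbd : ∀ i ω, |Z i ω| ≤ 1)
    (hmgf : ∀ i (t:ℝ), mgf (Z i) P t ≤ Real.exp (t^2/8))
    (s : ℝ) (hs : 0 ≤ s) :
    P {ω | (m:ℝ)*s ≤ |∑ i, Z i ω|} ≤ ENNReal.ofReal (2 * Real.exp (-2*m*s^2)) := by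
  have hneg_indep : iIndepFun (fun i => -(Z i)) P :=
    hindep.comp (fun _ (x:ℝ) => -x) (fun _ => measurable_neg)
  have hneg_meas : ∀ i, Measurable (-(Z i)) := fun i => (hmeas i).neg
  have hneg_bd : ∀ i ω, |(-(Z i)) ω| ≤ 1 := fun i ω => by simpa using hbd i ω
  have hneg_mgf : ∀ i (t:ℝ), mgf (-(Z i)) P t ≤ Real.exp (t^2/8) := by
    intro i t
    rw [mgf_neg]
    calc mgf (Z i) P (-t) ≤ Real.exp ((-t)^2/8) := hmgf i (-t)
      _ = Real.exp (t^2/8) := by rw [neg_sq]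
  have h1 := hoeffding_ge Z hindep hmeas hbd hmgf s hs
  have h2 := hoeffding_ge (fun i => -(Z i)) hneg_indep hneg_meas hneg_bd hneg_mgf s hs
  have hsub : {ω | (m:ℝ)*s ≤ |∑ i, Z i ω|} ⊆
      {ω | (m:ℝ)*s ≤ ∑ i, Z i ω} ∪ {ω | (m:ℝ)*s ≤ ∑ i, (-(Z i)) ω} := by
    intro ω hω
    simp only [Set.mem_setOf_eq] at hω
    rcases le_abs.1 hω with h|h
    · exact Or.inl h
    · refine Or.inr ?_
      simp only [Set.mem_setOf_eq, Pi.neg_apply, Finset.sum_neg_distrib]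
      exact h
  calc P {ω | (m:ℝ)*s ≤ |∑ i, Z i ω|}
      ≤ P ({ω | (m:ℝ)*s ≤ ∑ i, Z i ω} ∪ {ω | (m:ℝ)*s ≤ ∑ i, (-(Z i)) ω}) :=
        measure_mono hsub
    _ ≤ P {ω | (m:ℝ)*s ≤ ∑ i, Z i ω} + P {ω | (m:ℝ)*s ≤ ∑ i, (-(Z i)) ω} :=
        measure_union_le _ _
    _ ≤ ENNReal.ofReal (Real.exp (-2*m*s^2)) + ENNReal.ofReal (Real.exp (-2*m*s^2)) :=
        add_le_add h1 h2
    _ = ENNReal.ofReal (2 * Real.exp (-2*m*s^2)) := by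
        rw [← ENNReal.ofReal_add (Real.exp_pos _).le (Real.exp_pos _).le]; ring_nf

lemma integral_exp_neg_mul_Ioi {r : ℝ} (hr : 0 < r) (a : ℝ) :
    ∫ x in Set.Ioi a, Real.exp (-r*x) = Real.exp (-r*a)/r := by
  have hderiv : ∀ x ∈ Set.Ici a,
      HasDerivAt (fun x => -Real.exp (-r*x)/r) (Real.exp (-r*x)) x := by
    intro x _
    have h := (((hasDerivAt_id x).const_mul (-r)).exp).neg.div_const r
    refine h.congr_deriv ?_
    field_simp
    rfl
  have hint := exp_neg_integrableOn_Ioi a hr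
  have htend : Filter.Tendsto (fun x => -Real.exp (-r*x)/r) Filter.atTop (nhds 0) := by
    have h1 : Filter.Tendsto (fun x : ℝ => Real.exp (-r*x)) Filter.atTop (nhds 0) :=
      Real.tendsto_exp_atBot.comp
        (Filter.tendsto_id.const_mul_atTop_of_neg (neg_neg_iff_pos.2 hr))
    have := (h1.neg).div_const r
    simpa using this
  have := integral_Ioi_of_hasDerivAt_of_tendsto' hderiv hint htend
  rw [this]
  field_simp
  ring

lemma laplace_tail {β : ℝ} (hβ : 0 < β) {c : ℝ} (hc : 0 < c) :
    laplaceMeasure β {x | c ≤ |x|} = ENNReal.ofReal (Real.exp (-c/β)) := by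
  set f : ℝ → ℝ≥0∞ := fun x => ENNReal.ofReal (1 / (2 * β) * Real.exp (-|x| / β)) with hf
  have hset : {x : ℝ | c ≤ |x|} = Set.Iic (-c) ∪ Set.Ici c := by
    ext x
    simp only [Set.mem_setOf_eq, Set.mem_union, Set.mem_Iic, Set.mem_Ici]
    rw [le_abs]
    constructor
    · rintro (h|h)
      · exact Or.inr h
      · exact Or.inl (by linarith)
    · rintro (h|h)
      · exact Or.inr (by linarith)
      · exact Or.inl h
  have hmeas_set : MeasurableSet {x : ℝ | c ≤ |x|} := by
    rw [hset]; exact measurableSet_Iic.union measurableSet_Ici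
  have happ : laplaceMeasure β {x | c ≤ |x|} = ∫⁻ x in {x | c ≤ |x|}, f x := by
    rw [laplaceMeasure, withDensity_apply _ hmeas_set]
  rw [happ, hset]
  have hdisj : Disjoint (Set.Iic (-c)) (Set.Ici c) :=
    Set.Iic_disjoint_Ici.2 (by linarith)
  rw [lintegral_union measurableSet_Ici hdisj]
  -- right piece
  have hright : ∫⁻ x in Set.Ici c, f x = ENNReal.ofReal (Real.exp (-c/β) / 2) := by
    have hcong : ∫⁻ x in Set.Ici c, f x
        = ∫⁻ x in Set.Ici c, ENNReal.ofReal (1 / (2 * β) * Real.exp (-(1/β)*x)) := by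
      refine setLIntegral_congr_fun measurableSet_Ici (fun x hx => ?_)
      have hx0 : 0 < x := lt_of_lt_of_le hc hx
      rw [hf]
      simp only
      rw [abs_of_pos hx0]
      congr 2
      field_simp
    rw [hcong]
    have hintg : IntegrableOn (fun x => 1 / (2 * β) * Real.exp (-(1/β)*x)) (Set.Ici c) := by
      rw [integrableOn_Ici_iff_integrableOn_Ioi]
      exact (exp_neg_integrableOn_Ioi c (by positivity)).const_mul _
    rw [← ofReal_integral_eq_lintegral_ofReal hintg
      (ae_of_all _ fun x => by positivity)]
    congr 1
    rw [MeasureTheory.integral_Ici_eq_integral_Ioi, integral_const_mul,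
      integral_exp_neg_mul_Ioi (by positivity : (0:ℝ) < 1/β)]
    field_simp
  -- left piece equals right piece by symmetry
  have hleft : ∫⁻ x in Set.Iic (-c), f x = ∫⁻ x in Set.Ici c, f x := by
    have hmp : MeasurePreserving (fun x : ℝ => -x) volume volume :=
      Measure.measurePreserving_neg _
    have hemb : MeasurableEmbedding (fun x : ℝ => -x) :=
      (Homeomorph.neg ℝ).measurableEmbedding
    have := hmp.setLIntegral_comp_emb hemb f (Set.Iic (-c))
    have himg : (fun x : ℝ => -x) '' Set.Iic (-c) = Set.Ici c := by
      ext x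
      constructor
      · rintro ⟨y, hy, rfl⟩
        simp only [Set.mem_Iic] at hy
        simp only [Set.mem_Ici]
        linarith
      · intro hx
        simp only [Set.mem_Ici] at hx
        exact ⟨-x, by simp only [Set.mem_Iic]; linarith, by simp⟩
    rw [himg] at this
    calc ∫⁻ x in Set.Iic (-c), f x = ∫⁻ x in Set.Iic (-c), f (-x) := by
          refine setLIntegral_congr_fun measurableSet_Iic (fun x hx => ?_)
          rw [hf]
          simp [abs_neg]
      _ = ∫⁻ x in Set.Ici c, f x := this
  rw [hleft, hright, ← ENNReal.ofReal_add (by positivity) (by positivity)]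
  congr 1
  ring

lemma mgf_shift01 (Z : Ω → ℝ) (hZ : Measurable Z) (h01 : ∀ ω, Z ω = 0 ∨ Z ω = 1)
    (p : ℝ) (hp0 : 0 ≤ p) (hP : P {ω | Z ω = 1} = ENNReal.ofReal p) (c t : ℝ) :
    mgf (fun ω => Z ω - c) P t = Real.exp (-(t*c)) * (1 + (Real.exp t - 1) * p) := by
  have hZint : Integrable Z P := integrable_bdd Z hZ 1 (fun ω => by
    rcases h01 ω with h|h <;> simp [h])
  have hEZ : ∫ ω, Z ω ∂P = p := by
    rw [integral_two_point Z hZ h01, hP, ENNReal.toReal_ofReal hp0]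
  have hpt : ∀ ω, Real.exp (t * (Z ω - c))
      = Real.exp (-(t*c)) * (1 + (Real.exp t - 1) * Z ω) := by
    intro ω
    rcases h01 ω with h|h <;> rw [h]
    · have h2 : (1:ℝ) + (Real.exp t - 1) * 0 = 1 := by ring
      rw [h2, mul_one]
      congr 1
      ring
    · have h2 : (1:ℝ) + (Real.exp t - 1) * 1 = Real.exp t := by ring
      rw [h2, ← Real.exp_add]
      congr 1
      ring
  simp only [mgf]
  calc ∫ ω, Real.exp (t * (Z ω - c)) ∂P
      = ∫ ω, Real.exp (-(t*c)) * (1 + (Real.exp t - 1) * Z ω) ∂P :=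
        integral_congr_ae (ae_of_all _ hpt)
    _ = Real.exp (-(t*c)) * ∫ ω, (1 + (Real.exp t - 1) * Z ω) ∂P := integral_const_mul _ _
    _ = Real.exp (-(t*c)) * (1 + (Real.exp t - 1) * p) := by
        rw [integral_add (f := fun _ => (1:ℝ)) (g := fun ω => (Real.exp t - 1) * Z ω)
          (integrable_const 1) (hZint.const_mul _), integral_const,
          integral_const_mul, hEZ]
        simp

lemma mgf_Y (X b : Ω → ℝ) (hX : Measurable X) (hb : Measurable b)
    (hX01 : ∀ ω, X ω = 0 ∨ X ω = 1) (hb01 : ∀ ω, b ω = 0 ∨ b ω = 1)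
    (ε d : ℝ) (hε0 : 0 < ε) (hε1 : ε ≤ 1/2) (hd0 : 0 ≤ d) (hd1 : d ≤ 1)
    (hj1 : P {ω | X ω = 1 ∧ b ω = 1} = ENNReal.ofReal (d * (1/2 + ε/4)))
    (hj0 : P {ω | X ω = 0 ∧ b ω = 1} = ENNReal.ofReal ((1-d) * (1/2)))
    (hXd : P {ω | X ω = 1} = ENNReal.ofReal d)
    (t : ℝ) :
    mgf (fun ω => b ω - 1/2 - ε * X ω / 4) P t ≤ Real.exp (t^2/8) := by
  have hq0 : (0:ℝ) ≤ 1/2 + ε/4 := by linarith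
  have hq1 : (1:ℝ)/2 + ε/4 ≤ 1 := by linarith
  set q : ℝ := 1/2 + ε/4 with hq_def
  -- integrability
  have hXint : Integrable X P := integrable_bdd X hX 1 (fun ω => by
    rcases hX01 ω with h|h <;> simp [h])
  have hbint : Integrable b P := integrable_bdd b hb 1 (fun ω => by
    rcases hb01 ω with h|h <;> simp [h])
  have hWmeas : Measurable (fun ω => X ω * b ω) := hX.mul hb
  have hW01 : ∀ ω, X ω * b ω = 0 ∨ X ω * b ω = 1 := by
    intro ω
    rcases hX01 ω with h|h <;> rcases hb01 ω with h'|h' <;> simp [h, h']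
  have hWint : Integrable (fun ω => X ω * b ω) P := integrable_bdd _ hWmeas 1 (fun ω => by
    rcases hW01 ω with h|h <;> simp [h])
  -- expectations
  have hEX : ∫ ω, X ω ∂P = d := by
    rw [integral_two_point X hX hX01, hXd, ENNReal.toReal_ofReal hd0]
  have hsetW : {ω | X ω * b ω = 1} = {ω | X ω = 1 ∧ b ω = 1} := by
    ext ω
    simp only [Set.mem_setOf_eq]
    constructor
    · intro h
      rcases hX01 ω with h1|h1 <;> rcases hb01 ω with h2|h2 <;>
        simp [h1, h2] at h ⊢
    · rintro ⟨h1, h2⟩; rw [h1, h2]; ring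
  have hEW : ∫ ω, X ω * b ω ∂P = d * q := by
    rw [integral_two_point _ hWmeas hW01, hsetW, hj1, ENNReal.toReal_ofReal (by positivity)]
  have hEb : ∫ ω, b ω ∂P = d * q + (1-d) * (1/2) := by
    have hsetb : {ω | b ω = 1} = {ω | X ω = 1 ∧ b ω = 1} ∪ {ω | X ω = 0 ∧ b ω = 1} := by
      ext ω
      simp only [Set.mem_setOf_eq, Set.mem_union]
      constructor
      · intro h
        rcases hX01 ω with h1|h1
        · exact Or.inr ⟨h1, h⟩
        · exact Or.inl ⟨h1, h⟩
      · rintro (⟨_, h⟩|⟨_, h⟩) <;> exact h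
    have hm0 : MeasurableSet {ω | X ω = 0 ∧ b ω = 1} := by
      have : {ω | X ω = 0 ∧ b ω = 1} = X ⁻¹' {0} ∩ b ⁻¹' {1} := by
        ext ω; simp [Set.mem_setOf_eq]
      rw [this]
      exact (hX (measurableSet_singleton 0)).inter (hb (measurableSet_singleton 1))
    have hdisj : Disjoint {ω | X ω = 1 ∧ b ω = 1} {ω | X ω = 0 ∧ b ω = 1} := by
      rw [Set.disjoint_left]
      rintro ω ⟨h1, _⟩ ⟨h0, _⟩
      rw [h1] at h0
      norm_num at h0
    have h1d : (0:ℝ) ≤ 1 - d := by linarith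
    rw [integral_two_point b hb hb01, hsetb, measure_union hdisj hm0, hj1, hj0,
      ← ENNReal.ofReal_add (by positivity) (by positivity),
      ENNReal.toReal_ofReal (by positivity)]
  -- pointwise identity
  set a : ℝ := Real.exp (-(t*ε/4)) - 1 with ha_def
  set cc : ℝ := Real.exp t - 1 with hcc_def
  have hpt : ∀ ω, Real.exp (t * (b ω - 1/2 - ε * X ω / 4))
      = Real.exp (-(t/2)) * ((1 + a * X ω) * (1 + cc * b ω)) := by
    intro ω
    rcases hX01 ω with h1|h1 <;> rcases hb01 ω with h2|h2 <;> rw [h1, h2]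
    · have h3 : (1 + a*(0:ℝ)) * (1 + cc*0) = 1 := by ring
      rw [h3, mul_one]
      congr 1
      ring
    · have h3 : (1 + a*(0:ℝ)) * (1 + cc*1) = Real.exp t := by rw [hcc_def]; ring
      rw [h3, ← Real.exp_add]
      congr 1
      ring
    · have h3 : (1 + a*(1:ℝ)) * (1 + cc*0) = Real.exp (-(t*ε/4)) := by rw [ha_def]; ring
      rw [h3, ← Real.exp_add]
      congr 1
      ring
    · have h3 : (1 + a*(1:ℝ)) * (1 + cc*1) = Real.exp (-(t*ε/4)) * Real.exp t := by
        rw [ha_def, hcc_def]; ring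
      rw [h3, ← mul_assoc, ← Real.exp_add, ← Real.exp_add]
      congr 1
      ring
  -- integrate
  have hI3 : ∫ ω, (1 + a * X ω + cc * b ω + (a*cc) * (X ω * b ω)) ∂P
      = 1 + a * d + cc * (d * q + (1-d) * (1/2)) + (a*cc) * (d * q) := by
    rw [integral_add (f := fun ω => 1 + a * X ω + cc * b ω)
        (g := fun ω => (a*cc) * (X ω * b ω))
        (((integrable_const 1).add (hXint.const_mul a)).add (hbint.const_mul cc))
        (hWint.const_mul _),
      integral_add (f := fun ω => 1 + a * X ω) (g := fun ω => cc * b ω)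
        ((integrable_const 1).add (hXint.const_mul a)) (hbint.const_mul cc),
      integral_add (f := fun _ => (1:ℝ)) (g := fun ω => a * X ω)
        (integrable_const 1) (hXint.const_mul a),
      integral_const, integral_const_mul, integral_const_mul, integral_const_mul,
      hEX, hEb, hEW]
    simp
  have hmgf_eq : mgf (fun ω => b ω - 1/2 - ε * X ω / 4) P t
      = Real.exp (-(t/2)) * (1 + a * d + cc * (d * q + (1-d) * (1/2)) + (a*cc) * (d * q)) := by
    simp only [mgf]
    rw [integral_congr_ae (ae_of_all _ hpt), integral_const_mul]
    rw [integral_congr_ae (ae_of_all _ (fun ω => by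
      show (1 + a * X ω) * (1 + cc * b ω)
        = 1 + a * X ω + cc * b ω + (a*cc) * (X ω * b ω)
      ring))]
    rw [hI3]
  rw [hmgf_eq]
  -- convex combination of two Bernoulli mgf bounds
  have hexpq : Real.exp (-(q*t)) = Real.exp (-(t/2)) * Real.exp (-(t*ε/4)) := by
    rw [← Real.exp_add]
    congr 1
    rw [hq_def]
    ring
  have hexph : Real.exp (-((1:ℝ)/2*t)) = Real.exp (-(t/2)) := by congr 1; ring
  have hcomb : Real.exp (-(t/2)) * (1 + a * d + cc * (d * q + (1-d) * (1/2)) + (a*cc) * (d * q))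
      = d * (Real.exp (-(q*t)) * (1 - q + q * Real.exp t))
        + (1-d) * (Real.exp (-((1:ℝ)/2*t)) * (1 - 1/2 + (1/2) * Real.exp t)) := by
    rw [hexpq, hexph, ha_def, hcc_def]
    ring
  rw [hcomb]
  have hb1 := bern_mgf_le hq0 hq1 t
  have hb2 := bern_mgf_le (by norm_num : (0:ℝ) ≤ 1/2) (by norm_num) t
  calc d * (Real.exp (-(q*t)) * (1 - q + q * Real.exp t))
        + (1-d) * (Real.exp (-((1:ℝ)/2*t)) * (1 - 1/2 + (1/2) * Real.exp t))
      ≤ d * Real.exp (t^2/8) + (1-d) * Real.exp (t^2/8) :=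
        add_le_add (mul_le_mul_of_nonneg_left hb1 hd0)
          (mul_le_mul_of_nonneg_left hb2 (by linarith))
    _ = Real.exp (t^2/8) := by ring

lemma arith1 (mR α δ₁ : ℝ) (hm : mR ≠ 0) : 1/mR * (mR * (α*(1-δ₁))) = α*(1-δ₁) := by
  field_simp

lemma arith2 (ε mR α δ₁ δ₂ : ℝ) (hε : ε ≠ 0) (hm : mR ≠ 0) :
    4/(ε*mR) * (mR * (ε*α*δ₁*(1-δ₂)/4)) = α*δ₁*(1-δ₂) := by
  field_simp

lemma decomp_arith (ε mR d L Sb SX : ℝ) (hε : ε ≠ 0) (hm : mR ≠ 0) :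
    ((4/ε) * ((1/mR) * Sb - 1/2) + L) - d
      = (4/(ε*mR)) * (Sb - mR/2 - ε*SX/4) + ((1/mR)*(SX - mR*d) + L) := by
  field_simp
  ring

end Aux

set_option maxHeartbeats 1000000 in
/-- Accuracy of the conventional pan-private density estimator: with `X_i` i.i.d.
`Bernoulli(d)`, `b_i` conditionally `Bernoulli(1/2 + εX_i/4)` given `X`, `L` an independent
`Laplace(0, 1/(εm))` random variable and `d̃ = (4/ε)((1/m)∑ b_i − 1/2) + L`,
`P(|d̃ − d| ≥ α) ≤ 2e^{−2mα²(1−δ₁)²} + 2e^{−(1/8)mε²α²δ₁²(1−δ₂)²} + e^{−εmαδ₁δ₂}`. -/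
theorem stmt_6 {Ω : Type*} [MeasurableSpace Ω] (P : Measure Ω) [IsProbabilityMeasure P]
    (ε : ℝ) (hε0 : 0 < ε) (hε1 : ε ≤ 1 / 2) (m : ℕ) (hm : 1 ≤ m) (d : ℝ)
    (hd : d ∈ Set.Icc (0 : ℝ) 1) (α : ℝ) (hα : 0 < α)
    (δ₁ δ₂ : ℝ) (hδ₁ : δ₁ ∈ Set.Ioo (0 : ℝ) 1) (hδ₂ : δ₂ ∈ Set.Ioo (0 : ℝ) 1)
    (X b : Fin m → Ω → ℝ) (L : Ω → ℝ)
    (hXmeas : ∀ i, Measurable (X i)) (hbmeas : ∀ i, Measurable (b i))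
    (hLmeas : Measurable L)
    (hX01 : ∀ i ω, X i ω = 0 ∨ X i ω = 1)
    (hb01 : ∀ i ω, b i ω = 0 ∨ b i ω = 1)
    -- marginal law of `X i`: Bernoulli(d)
    (hXdist : ∀ i, P {ω | X i ω = 1} = ENNReal.ofReal d)
    -- conditionally on `X i`, `b i` is Bernoulli(1/2 + ε·X i/4)
    (hjoint1 : ∀ i, P {ω | X i ω = 1 ∧ b i ω = 1} = ENNReal.ofReal (d * (1 / 2 + ε / 4)))
    (hjoint0 : ∀ i, P {ω | X i ω = 0 ∧ b i ω = 1} = ENNReal.ofReal ((1 - d) * (1 / 2)))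
    -- the pairs `(X i, b i)` are independent across `i`
    (hpairindep : iIndepFun
      (fun i ω => (X i ω, b i ω)) P)
    -- `L` is independent of all the pairs
    (hLindep : IndepFun L (fun ω => fun i => (X i ω, b i ω)) P)
    (hLlaw : Measure.map L P = laplaceMeasure (1 / (ε * m))) :
    P {ω | α ≤ |((4 / ε) * ((1 / (m : ℝ)) * ∑ i, b i ω - 1 / 2) + L ω) - d|} ≤
      ENNReal.ofReal
        (2 * Real.exp (-2 * m * α ^ 2 * (1 - δ₁) ^ 2) +
         2 * Real.exp (-(1 / 8) * m * ε ^ 2 * α ^ 2 * δ₁ ^ 2 * (1 - δ₂) ^ 2) +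
         Real.exp (-(ε * m * α * δ₁ * δ₂))) := by
  obtain ⟨hd0, hd1⟩ := hd
  obtain ⟨hδ₁0, hδ₁1⟩ := hδ₁
  obtain ⟨hδ₂0, hδ₂1⟩ := hδ₂
  have hm0 : (0:ℝ) < (m:ℝ) := by exact_mod_cast hm
  -- the three error thresholds
  set s₁ : ℝ := α * (1 - δ₁) with hs₁_def
  set s₂ : ℝ := ε * α * δ₁ * (1 - δ₂) / 4 with hs₂_def
  set c : ℝ := α * δ₁ * δ₂ with hc_def
  have hs₁0 : 0 ≤ s₁ := by
    rw [hs₁_def]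
    have : (0:ℝ) ≤ 1 - δ₁ := by linarith
    exact mul_nonneg hα.le this
  have hs₂0 : 0 ≤ s₂ := by
    rw [hs₂_def]
    have h1 : (0:ℝ) ≤ 1 - δ₂ := by linarith
    have h2 := mul_nonneg (mul_nonneg (mul_nonneg hε0.le hα.le) hδ₁0.le) h1
    linarith
  have hc0 : 0 < c := by rw [hc_def]; positivity
  -- centered variables
  set ZX : Fin m → Ω → ℝ := fun i ω => X i ω - d with hZX_def
  set ZY : Fin m → Ω → ℝ := fun i ω => b i ω - 1/2 - ε * X i ω / 4 with hZY_def
  have hZXmeas : ∀ i, Measurable (ZX i) := fun i => (hXmeas i).sub measurable_const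
  have hZYmeas : ∀ i, Measurable (ZY i) := fun i =>
    (((hbmeas i).sub measurable_const).sub (((hXmeas i).const_mul ε).div_const 4))
  have hZXindep : iIndepFun ZX P := by
    have h := hpairindep.comp (fun _ (p : ℝ × ℝ) => p.1 - d)
      (fun _ => measurable_fst.sub measurable_const)
    have heq : (fun i => (fun (p : ℝ × ℝ) => p.1 - d) ∘ (fun ω => (X i ω, b i ω))) = ZX := rfl
    rwa [heq] at h
  have hZYindep : iIndepFun ZY P := by
    have h := hpairindep.comp (fun _ (p : ℝ × ℝ) => p.2 - 1/2 - ε * p.1 / 4)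
      (fun _ => ((measurable_snd.sub measurable_const).sub
        ((measurable_fst.const_mul ε).div_const 4)))
    have heq : (fun i => (fun (p : ℝ × ℝ) => p.2 - 1/2 - ε * p.1 / 4)
        ∘ (fun ω => (X i ω, b i ω))) = ZY := rfl
    rwa [heq] at h
  have hZXbd : ∀ i ω, |ZX i ω| ≤ 1 := by
    intro i ω
    show |X i ω - d| ≤ 1
    rcases hX01 i ω with h|h <;> rw [h] <;> rw [abs_le] <;> constructor <;> linarith
  have hZYbd : ∀ i ω, |ZY i ω| ≤ 1 := by
    intro i ω
    show |b i ω - 1/2 - ε * X i ω / 4| ≤ 1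
    rcases hX01 i ω with h|h <;> rcases hb01 i ω with h'|h' <;> rw [h, h'] <;>
      rw [abs_le] <;> constructor <;> nlinarith
  have hZXmgf : ∀ i (t : ℝ), mgf (ZX i) P t ≤ Real.exp (t^2/8) := by
    intro i t
    have h := mgf_shift01 (P := P) (X i) (hXmeas i) (hX01 i) d hd0 (hXdist i) d t
    have : mgf (ZX i) P t = Real.exp (-(t*d)) * (1 + (Real.exp t - 1) * d) := h
    rw [this]
    have heq : Real.exp (-(t*d)) * (1 + (Real.exp t - 1) * d)
        = Real.exp (-(d*t)) * (1 - d + d * Real.exp t) := by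
      have : Real.exp (-(t*d)) = Real.exp (-(d*t)) := by congr 1; ring
      rw [this]; ring
    rw [heq]
    exact bern_mgf_le hd0 hd1 t
  have hZYmgf : ∀ i (t : ℝ), mgf (ZY i) P t ≤ Real.exp (t^2/8) := by
    intro i t
    exact mgf_Y (X i) (b i) (hXmeas i) (hbmeas i) (hX01 i) (hb01 i) ε d
      hε0 hε1 hd0 hd1 (hjoint1 i) (hjoint0 i) (hXdist i) t
  -- the three tail bounds
  have hA := hoeffding_abs ZX hZXindep hZXmeas hZXbd hZXmgf s₁ hs₁0
  have hB := hoeffding_abs ZY hZYindep hZYmeas hZYbd hZYmgf s₂ hs₂0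
  have hβ : (0:ℝ) < 1 / (ε * m) := by positivity
  have hC : P {ω | c ≤ |L ω|} = ENNReal.ofReal (Real.exp (-(ε * m * α * δ₁ * δ₂))) := by
    have hmeas_set : MeasurableSet {x : ℝ | c ≤ |x|} := by
      have : {x : ℝ | c ≤ |x|} = Set.Iic (-c) ∪ Set.Ici c := by
        ext x
        simp only [Set.mem_setOf_eq, Set.mem_union, Set.mem_Iic, Set.mem_Ici]
        rw [le_abs]
        constructor
        · rintro (h|h)
          · exact Or.inr h
          · exact Or.inl (by linarith)
        · rintro (h|h)
          · exact Or.inr (by linarith)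
          · exact Or.inl h
      rw [this]
      exact measurableSet_Iic.union measurableSet_Ici
    have h1 : {ω | c ≤ |L ω|} = L ⁻¹' {x | c ≤ |x|} := rfl
    rw [h1, ← Measure.map_apply hLmeas hmeas_set, hLlaw, laplace_tail hβ hc0]
    congr 1
    rw [div_div_eq_mul_div, div_one, hc_def]
    ring
  -- inclusion of the target event in the union of the three events
  have hsub : {ω | α ≤ |((4 / ε) * ((1 / (m : ℝ)) * ∑ i, b i ω - 1 / 2) + L ω) - d|}
      ⊆ {ω | (m:ℝ)*s₁ ≤ |∑ i, ZX i ω|} ∪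
        ({ω | (m:ℝ)*s₂ ≤ |∑ i, ZY i ω|} ∪ {ω | c ≤ |L ω|}) := by
    intro ω hω
    simp only [Set.mem_setOf_eq] at hω
    by_contra hnot
    simp only [Set.mem_union, Set.mem_setOf_eq, not_or, not_le] at hnot
    obtain ⟨h1, h2, h3⟩ := hnot
    -- algebraic decomposition
    have hSY : ∑ i, ZY i ω = (∑ i, b i ω) - (m:ℝ)/2 - ε * (∑ i, X i ω) / 4 := by
      have h0 : ∑ i, ZY i ω = ∑ i, (b i ω - 1/2 - ε * X i ω / 4) := rfl
      rw [h0, Finset.sum_sub_distrib, Finset.sum_sub_distrib, Finset.sum_const]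
      simp only [Finset.card_univ, Fintype.card_fin, nsmul_eq_mul]
      rw [← Finset.sum_div, ← Finset.mul_sum]
      ring
    have hSX : ∑ i, ZX i ω = (∑ i, X i ω) - (m:ℝ)*d := by
      have h0 : ∑ i, ZX i ω = ∑ i, (X i ω - d) := rfl
      rw [h0, Finset.sum_sub_distrib, Finset.sum_const]
      simp only [Finset.card_univ, Fintype.card_fin, nsmul_eq_mul]
    have hεne : ε ≠ 0 := ne_of_gt hε0
    have hmne : (m:ℝ) ≠ 0 := ne_of_gt hm0
    have hdecomp : ((4 / ε) * ((1 / (m : ℝ)) * ∑ i, b i ω - 1 / 2) + L ω) - d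
        = (4 / (ε * (m:ℝ))) * (∑ i, ZY i ω)
          + ((1 / (m:ℝ)) * (∑ i, ZX i ω) + L ω) := by
      rw [hSY, hSX]
      exact decomp_arith ε (m:ℝ) d (L ω) _ _ hεne hmne
    have hb1 : |(4 / (ε * (m:ℝ))) * (∑ i, ZY i ω)| < α * δ₁ * (1 - δ₂) := by
      rw [abs_mul, abs_of_pos (by positivity : (0:ℝ) < 4 / (ε * (m:ℝ)))]
      calc 4 / (ε * (m:ℝ)) * |∑ i, ZY i ω| < 4 / (ε * (m:ℝ)) * ((m:ℝ)*s₂) := by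
            apply mul_lt_mul_of_pos_left h2 (by positivity)
        _ = α * δ₁ * (1 - δ₂) := by
            rw [hs₂_def]
            exact arith2 ε (m:ℝ) α δ₁ δ₂ (ne_of_gt hε0) (ne_of_gt hm0)
    have hb2 : |(1 / (m:ℝ)) * (∑ i, ZX i ω)| < α * (1 - δ₁) := by
      rw [abs_mul, abs_of_pos (by positivity : (0:ℝ) < 1 / (m:ℝ))]
      calc 1 / (m:ℝ) * |∑ i, ZX i ω| < 1 / (m:ℝ) * ((m:ℝ)*s₁) := by
            apply mul_lt_mul_of_pos_left h1 (by positivity)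
        _ = α * (1 - δ₁) := by
            rw [hs₁_def]
            exact arith1 (m:ℝ) α δ₁ (ne_of_gt hm0)
    have habs : |((4 / ε) * ((1 / (m : ℝ)) * ∑ i, b i ω - 1 / 2) + L ω) - d| < α := by
      rw [hdecomp]
      calc |(4 / (ε * (m:ℝ))) * (∑ i, ZY i ω) + ((1 / (m:ℝ)) * (∑ i, ZX i ω) + L ω)|
          ≤ |(4 / (ε * (m:ℝ))) * (∑ i, ZY i ω)| + |(1 / (m:ℝ)) * (∑ i, ZX i ω) + L ω| :=
            abs_add_le _ _
        _ ≤ |(4 / (ε * (m:ℝ))) * (∑ i, ZY i ω)| + (|(1 / (m:ℝ)) * (∑ i, ZX i ω)| + |L ω|) :=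
            add_le_add_right (abs_add_le _ _) _
        _ < α * δ₁ * (1 - δ₂) + (α * (1 - δ₁) + c) := by
            apply add_lt_add hb1 (add_lt_add hb2 h3)
        _ = α := by rw [hc_def]; ring
    exact absurd hω (not_le.2 habs)
  -- put the three bounds together
  calc P {ω | α ≤ |((4 / ε) * ((1 / (m : ℝ)) * ∑ i, b i ω - 1 / 2) + L ω) - d|}
      ≤ P ({ω | (m:ℝ)*s₁ ≤ |∑ i, ZX i ω|} ∪
          ({ω | (m:ℝ)*s₂ ≤ |∑ i, ZY i ω|} ∪ {ω | c ≤ |L ω|})) := measure_mono hsub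
    _ ≤ P {ω | (m:ℝ)*s₁ ≤ |∑ i, ZX i ω|} +
        P ({ω | (m:ℝ)*s₂ ≤ |∑ i, ZY i ω|} ∪ {ω | c ≤ |L ω|}) := measure_union_le _ _
    _ ≤ P {ω | (m:ℝ)*s₁ ≤ |∑ i, ZX i ω|} +
        (P {ω | (m:ℝ)*s₂ ≤ |∑ i, ZY i ω|} + P {ω | c ≤ |L ω|}) :=
          add_le_add_right (measure_union_le _ _) _
    _ ≤ ENNReal.ofReal (2 * Real.exp (-2*m*s₁^2)) +
        (ENNReal.ofReal (2 * Real.exp (-2*m*s₂^2)) +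
          ENNReal.ofReal (Real.exp (-(ε * m * α * δ₁ * δ₂)))) := by
          exact add_le_add hA (add_le_add hB (le_of_eq hC))
    _ = ENNReal.ofReal
        (2 * Real.exp (-2 * m * α ^ 2 * (1 - δ₁) ^ 2) +
         2 * Real.exp (-(1 / 8) * m * ε ^ 2 * α ^ 2 * δ₁ ^ 2 * (1 - δ₂) ^ 2) +
         Real.exp (-(ε * m * α * δ₁ * δ₂))) := by
        rw [← ENNReal.ofReal_add (by positivity) (by positivity),
          ← ENNReal.ofReal_add (by positivity) (by positivity)]
        congr 1
        have e1 : -2*(m:ℝ)*s₁^2 = -2 * m * α ^ 2 * (1 - δ₁) ^ 2 := by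
          rw [hs₁_def]; ring
        have e2 : -2*(m:ℝ)*s₂^2 = -(1 / 8) * m * ε ^ 2 * α ^ 2 * δ₁ ^ 2 * (1 - δ₂) ^ 2 := by
          rw [hs₂_def]; ring
        rw [e1, e2]
        ring
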